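/- Let (M, ⁰T'', ζ) be a normal strongly pseudoconvex manifold, θ the 1-form with θ|_{⁰T''+⁰T̄''} = 0 and θ(ζ) = 1, and set F^{p,q} = { u ∈ A^{p,q}(M) : dθ∧(ζ⌟u) = 0 }. Then: (1) if u ∈ F^{p,q} then d''u ∈ F^{p,q+1} and d'u ∈ F^{p+1,q}; (2) d'd'' + d''d' = 0 on F^{p,q}; so (F^{p,q}, d', d'') is a double complex. -/
import Mathlib


/-- Let `(M, ⁰T'', ζ)` be a normal strongly pseudoconvex manifold, `θ`
the 1-form with `θ|_{⁰T''+⁰T̄''} = 0` and `θ(ζ) = 1`, and set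
`F^{p,q} = { u ∈ A^{p,q}(M) : dθ∧(ζ⌟u) = 0 }`.  Then:
(1) if `u ∈ F^{p,q}` then `d''u ∈ F^{p,q+1}` and `d'u ∈ F^{p+1,q}`;
(2) `d'd'' + d''d' = 0` on `F^{p,q}`; so `(F^{p,q}, d', d'')` is a double complex.

See `stmt_7` for the abstract model of the forms of `M`: `A^{p,q}(M)` is
`{u | P true p q u = u}` and `d1`, `d2` are `d'`, `d''`. -/
theorem stmt_8
    -- the complex-valued smooth differential forms on M (all degrees together)
    (Ω : Type*) [AddCommGroup Ω] [Module ℂ Ω]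
    -- the exterior derivative
    (d : Ω →ₗ[ℂ] Ω)
    (hd : ∀ u : Ω, d (d u) = 0)
    -- `P b p q` is the projection onto the component of type
    -- (ℂζ)*^ε ∧ ∧^p(⁰T̄'')* ∧ ∧^q(⁰T'')*, where ε = 1 if b = true and ε = 0 otherwise,
    -- for the decomposition induced by ℂ⊗TM = ⁰T'' ⊕ ⁰T̄'' ⊕ ℂζ
    (P : Bool → ℕ → ℕ → Ω →ₗ[ℂ] Ω)
    (hPidem : ∀ b p q (u : Ω), P b p q (P b p q u) = P b p q u)
    (hPorth : ∀ b p q b' p' q', (b ≠ b' ∨ p ≠ p' ∨ q ≠ q') →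
      ∀ u : Ω, P b p q (P b' p' q' u) = 0)
    -- the wedge product
    (wedge : Ω →ₗ[ℂ] Ω →ₗ[ℂ] Ω)
    -- the 1-form θ with θ|_{⁰T''+⁰T̄''} = 0 and θ(ζ) = 1
    (θ : Ω) (hθ : P true 0 0 θ = θ)
    -- contraction ζ ⌟ · with the normal vector field ζ
    (iζ : Ω →ₗ[ℂ] Ω)
    -- the operators d' and d'': components of the exterior derivative
    (d1 d2 : Ω →ₗ[ℂ] Ω)
    (hd1 : ∀ b p q (u : Ω), P b p q u = u → d1 u = P b (p + 1) q (d u))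
    (hd2 : ∀ b p q (u : Ω), P b p q u = u → d2 u = P b p (q + 1) (d u))
    -- du = d'u + d''u − dθ∧(ζ⌟u) on A^{p,q}(M)
    (hdecomp : ∀ p q (u : Ω), P true p q u = u →
      d u = d1 u + d2 u - wedge (d θ) (iζ u))
    -- ζ ⌟ · maps A^{p,q} into the type ∧^p(⁰T̄'')* ∧ ∧^q(⁰T'')*
    (hiζ : ∀ p q (u : Ω), P true p q u = u → P false p q (iζ u) = iζ u)
    -- dθ ∧ · raises (p,q) to (p+1,q+1) and kills the (ℂζ)*-factor
    (hdθ : ∀ b p q (u : Ω), P b p q u = u →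
      P false (p + 1) (q + 1) (wedge (d θ) u) = wedge (d θ) u)
    :
    ∀ p q (u : Ω), (P true p q u = u ∧ wedge (d θ) (iζ u) = 0) →
      (P true p (q + 1) (d2 u) = d2 u ∧ wedge (d θ) (iζ (d2 u)) = 0) ∧
      (P true (p + 1) q (d1 u) = d1 u ∧ wedge (d θ) (iζ (d1 u)) = 0) ∧
      d1 (d2 u) + d2 (d1 u) = 0 := by

  intro p q u ⟨hu, hw⟩
  have key : ∀ b p' q' (b'' : Bool) (p'' q'' : ℕ) (v : Ω), P b p' q' v = v →
      (b'' ≠ b ∨ p'' ≠ p' ∨ q'' ≠ q') → P b'' p'' q'' v = 0 := by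
    intro b p' q' b'' p'' q'' v hv h
    rw [← hv]; exact hPorth b'' p'' q'' b p' q' h v
  have hdu : d u = d1 u + d2 u := by
    rw [hdecomp p q u hu, hw, sub_zero]
  have h1 := hd1 true p q u hu
  have h2 := hd2 true p q u hu
  have hP1 : P true (p + 1) q (d1 u) = d1 u := by rw [h1]; exact hPidem _ _ _ _
  have hP2 : P true p (q + 1) (d2 u) = d2 u := by rw [h2]; exact hPidem _ _ _ _
  -- expansions of d(d1 u) and d(d2 u)
  have e1 := hdecomp (p + 1) q (d1 u) hP1
  have e2 := hdecomp p (q + 1) (d2 u) hP2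
  have hzero : d (d1 u) + d (d2 u) = 0 := by
    rw [← map_add, ← hdu, hd]
  have hsum : d1 (d1 u) + d2 (d1 u) - wedge (d θ) (iζ (d1 u))
      + (d1 (d2 u) + d2 (d2 u) - wedge (d θ) (iζ (d2 u))) = 0 := by
    rw [← e1, ← e2]; exact hzero
  -- fixed-point facts for the six components
  have fa : P true (p + 1 + 1) q (d1 (d1 u)) = d1 (d1 u) := by
    rw [hd1 true (p + 1) q (d1 u) hP1]; exact hPidem _ _ _ _
  have fb : P true (p + 1) (q + 1) (d2 (d1 u)) = d2 (d1 u) := by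
    rw [hd2 true (p + 1) q (d1 u) hP1]; exact hPidem _ _ _ _
  have fc : P false (p + 1 + 1) (q + 1) (wedge (d θ) (iζ (d1 u)))
      = wedge (d θ) (iζ (d1 u)) :=
    hdθ false (p + 1) q (iζ (d1 u)) (hiζ (p + 1) q (d1 u) hP1)
  have fd : P true (p + 1) (q + 1) (d1 (d2 u)) = d1 (d2 u) := by
    rw [hd1 true p (q + 1) (d2 u) hP2]; exact hPidem _ _ _ _
  have fe : P true p (q + 1 + 1) (d2 (d2 u)) = d2 (d2 u) := by
    rw [hd2 true p (q + 1) (d2 u) hP2]; exact hPidem _ _ _ _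
  have ff : P false (p + 1) (q + 1 + 1) (wedge (d θ) (iζ (d2 u)))
      = wedge (d θ) (iζ (d2 u)) :=
    hdθ false p (q + 1) (iζ (d2 u)) (hiζ p (q + 1) (d2 u) hP2)
  have key2 : ∀ (b'' : Bool) (p'' q'' : ℕ),
      P b'' p'' q'' (d1 (d1 u)) + P b'' p'' q'' (d2 (d1 u))
        - P b'' p'' q'' (wedge (d θ) (iζ (d1 u)))
      + (P b'' p'' q'' (d1 (d2 u)) + P b'' p'' q'' (d2 (d2 u))
        - P b'' p'' q'' (wedge (d θ) (iζ (d2 u)))) = 0 := by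
    intro b'' p'' q''
    have := congrArg (P b'' p'' q'') hsum
    simpa [map_add, map_sub] using this
  -- wedge (d θ) (iζ (d1 u)) = 0
  have hw1 : wedge (d θ) (iζ (d1 u)) = 0 := by
    have h := key2 false (p + 1 + 1) (q + 1)
    rw [key _ _ _ _ _ _ _ fa (Or.inl (by simp)),
        key _ _ _ _ _ _ _ fb (Or.inl (by simp)),
        key _ _ _ _ _ _ _ fd (Or.inl (by simp)),
        key _ _ _ _ _ _ _ fe (Or.inl (by simp)),
        key _ _ _ _ _ _ _ ff (Or.inr (Or.inl (by omega))), fc] at h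
    linear_combination (norm := abel) -h
  have hw2 : wedge (d θ) (iζ (d2 u)) = 0 := by
    have h := key2 false (p + 1) (q + 1 + 1)
    rw [key _ _ _ _ _ _ _ fa (Or.inl (by simp)),
        key _ _ _ _ _ _ _ fb (Or.inl (by simp)),
        key _ _ _ _ _ _ _ fd (Or.inl (by simp)),
        key _ _ _ _ _ _ _ fe (Or.inl (by simp)),
        key _ _ _ _ _ _ _ fc (Or.inr (Or.inl (by omega))), ff] at h
    linear_combination (norm := abel) -h
  have hanti : d1 (d2 u) + d2 (d1 u) = 0 := by
    have h := key2 true (p + 1) (q + 1)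
    rw [key _ _ _ _ _ _ _ fa (Or.inr (Or.inl (by omega))),
        key _ _ _ _ _ _ _ fe (Or.inr (Or.inr (by omega))),
        key _ _ _ _ _ _ _ fc (Or.inl (by simp)),
        key _ _ _ _ _ _ _ ff (Or.inl (by simp)), fb, fd] at h
    linear_combination (norm := abel) h
  exact ⟨⟨hP2, hw2⟩, ⟨hP1, hw1⟩, hanti⟩
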